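/- Fix r_I, R_p > 0 and μ > 0. Define J(r_D) = ∫₀^{r_D} 2 t · S_I(t, r_I, R_p)/(π R_p²) dt and the closed-form collision probability P_C(r_D) = exp(−μ π r_D²) · (1 − exp(−μ π (r_I² − J(r_D))))/(1 − exp(−μ π r_I²)). Then 0 ≤ J(r_D) ≤ min(r_D², r_I²) for all r_D ≥ 0, and the function r_D ↦ P_C(r_D) is nonincreasing on [0, ∞). -/

import Mathlib

open MeasureTheory Metric Real

/-- `SI d r₁ r₂` is the area (two-dimensional Lebesgue measure) of the intersection of
two closed disks in the plane of radii `r₁` and `r₂` whose centers are at distance `d`. -/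
noncomputable def SI (d r₁ r₂ : ℝ) : ℝ :=
  (volume (closedBall (0 : EuclideanSpace ℝ (Fin 2)) r₁ ∩
    closedBall (EuclideanSpace.single (0 : Fin 2) d) r₂)).toReal

/-- `J(r_D) = ∫₀^{r_D} 2 t · S_I(t, r_I, R_p)/(π R_p²) dt`. -/
noncomputable def Jfun (r_I R_p r_D : ℝ) : ℝ :=
  ∫ t in (0:ℝ)..r_D, 2 * t * SI t r_I R_p / (π * R_p ^ 2)

/-- Closed-form collision probability of listen-before-talk (Proposition 3, eq. (14)). -/
noncomputable def pC (r_I R_p μ r_D : ℝ) : ℝ :=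
  Real.exp (-μ * (π * r_D ^ 2)) *
    (1 - Real.exp (-μ * (π * (r_I ^ 2 - Jfun r_I R_p r_D)))) /
    (1 - Real.exp (-μ * (π * r_I ^ 2)))

local notation "E" => EuclideanSpace ℝ (Fin 2)

lemma vol_cb (x : E) {r : ℝ} (hr : 0 ≤ r) :
    volume (closedBall x r) = ENNReal.ofReal (π * r ^ 2) := by
  rw [EuclideanSpace.volume_closedBall]
  simp only [Fintype.card_fin]
  rw [show ((2:ℕ):ℝ)/2 + 1 = 2 by norm_num, Real.Gamma_two]
  rw [sq_sqrt pi_nonneg]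
  rw [← ENNReal.ofReal_pow hr, ← ENNReal.ofReal_mul (by positivity)]
  ring_nf

lemma cont_single : Continuous (fun d : ℝ => EuclideanSpace.single (0 : Fin 2) d) := by
  have : (fun d : ℝ => EuclideanSpace.single (0 : Fin 2) d)
      = fun d : ℝ => d • EuclideanSpace.single (0 : Fin 2) (1:ℝ) := by
    funext d; ext i; simp [EuclideanSpace.single_apply]
  rw [this]
  exact continuous_id.smul continuous_const

variable {r_I R_p : ℝ}

lemma SI_nonneg (d : ℝ) : 0 ≤ SI d r_I R_p := ENNReal.toReal_nonneg

lemma fSI_lt_top (hrI : 0 ≤ r_I) (d : ℝ) :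
    volume (closedBall (0 : E) r_I ∩
      closedBall (EuclideanSpace.single (0 : Fin 2) d) R_p) < ⊤ :=
  lt_of_le_of_lt (measure_mono Set.inter_subset_left)
    (by rw [vol_cb _ hrI]; exact ENNReal.ofReal_lt_top)

lemma SI_le_right (hrI : 0 ≤ r_I) (hRp : 0 ≤ R_p) (d : ℝ) : SI d r_I R_p ≤ π * R_p ^ 2 := by
  have h := measure_mono (μ := volume) (Set.inter_subset_right (s := closedBall (0 : E) r_I)
    (t := closedBall (EuclideanSpace.single (0 : Fin 2) d) R_p))
  rw [vol_cb _ hRp] at h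
  calc SI d r_I R_p ≤ (ENNReal.ofReal (π * R_p ^ 2)).toReal :=
        ENNReal.toReal_mono ENNReal.ofReal_ne_top h
    _ = π * R_p ^ 2 := ENNReal.toReal_ofReal (by positivity)

lemma SI_le_left (hrI : 0 ≤ r_I) (d : ℝ) : SI d r_I R_p ≤ π * r_I ^ 2 := by
  have h := measure_mono (μ := volume) (Set.inter_subset_left (s := closedBall (0 : E) r_I)
    (t := closedBall (EuclideanSpace.single (0 : Fin 2) d) R_p))
  rw [vol_cb _ hrI] at h
  calc SI d r_I R_p ≤ (ENNReal.ofReal (π * r_I ^ 2)).toReal :=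
        ENNReal.toReal_mono ENNReal.ofReal_ne_top h
    _ = π * r_I ^ 2 := ENNReal.toReal_ofReal (by positivity)

lemma meas_fSI : Measurable (fun d : ℝ => volume (closedBall (0 : E) r_I ∩
    closedBall (EuclideanSpace.single (0 : Fin 2) d) R_p)) := by
  have hS : MeasurableSet {p : ℝ × E | p.2 ∈ closedBall (0 : E) r_I ∧
      dist p.2 (EuclideanSpace.single (0 : Fin 2) p.1) ≤ R_p} := by
    apply MeasurableSet.inter
    · exact measurableSet_closedBall.preimage measurable_snd
    · exact isClosed_le (continuous_snd.dist (cont_single.comp continuous_fst))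
        continuous_const |>.measurableSet
  have := measurable_measure_prodMk_left (ν := (volume : Measure E)) hS
  exact this

lemma meas_SI : Measurable (fun d : ℝ => SI d r_I R_p) :=
  meas_fSI.ennreal_toReal
lemma rot_inv (x : E) :
    volume (closedBall (0:E) r_I ∩ closedBall x R_p)
      = volume (closedBall (0:E) r_I ∩
          closedBall (EuclideanSpace.single (0 : Fin 2) ‖x‖) R_p) := by
  set w : E := EuclideanSpace.single (0 : Fin 2) ‖x‖ with hw
  have hn : ‖x‖ = ‖w‖ := by
    rw [hw, EuclideanSpace.norm_single, norm_norm]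
  set L : E ≃ₗᵢ[ℝ] E := Submodule.reflection (ℝ ∙ (x - w))ᗮ with hL
  have hLx : L x = w := Submodule.reflection_sub hn
  have hpre : ∀ (c : E) (r : ℝ), (L : E → E) ⁻¹' closedBall c r = closedBall (L.symm c) r := by
    intro c r
    ext y
    simp only [Set.mem_preimage, mem_closedBall]
    rw [← L.symm.dist_map (L y) c, L.symm_apply_apply]
  have := L.measurePreserving.measure_preimage
    (s := closedBall (0:E) r_I ∩ closedBall w R_p)
    ((measurableSet_closedBall.inter measurableSet_closedBall).nullMeasurableSet)
  rw [Set.preimage_inter, hpre, hpre, map_zero] at this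
  have hsx : L.symm w = x := L.symm_apply_eq.2 hLx.symm
  rw [hsx] at this
  rw [← this]

lemma fubini_step (hrI : 0 ≤ r_I) (hRp : 0 ≤ R_p) :
    ∫⁻ x : E, volume (closedBall (0:E) r_I ∩ closedBall x R_p)
      = ENNReal.ofReal (π * r_I ^ 2) * ENNReal.ofReal (π * R_p ^ 2) := by
  set T : Set (E × E) := {p | p.2 ∈ closedBall (0:E) r_I ∧ dist p.2 p.1 ≤ R_p} with hT
  have hTm : MeasurableSet T := by
    apply MeasurableSet.inter
    · exact measurableSet_closedBall.preimage measurable_snd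
    · exact (isClosed_le (continuous_snd.dist continuous_fst) continuous_const).measurableSet
  have h1 : (volume.prod volume) T = ∫⁻ x : E, volume (closedBall (0:E) r_I ∩ closedBall x R_p) := by
    rw [Measure.prod_apply hTm]
    exact lintegral_congr fun x => rfl
  have h2 : (volume.prod volume) T
      = ENNReal.ofReal (π * R_p ^ 2) * ENNReal.ofReal (π * r_I ^ 2) := by
    rw [Measure.prod_apply_symm hTm]
    have hsec : ∀ y : E, volume ((fun x : E => (x, y)) ⁻¹' T)
        = Set.indicator (closedBall (0:E) r_I) (fun _ => ENNReal.ofReal (π * R_p ^ 2)) y := by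
      intro y
      by_cases hy : y ∈ closedBall (0:E) r_I
      · have hy₂ : ‖y‖ ≤ r_I := by simpa using hy
        rw [Set.indicator_of_mem hy]
        have : ((fun x : E => (x, y)) ⁻¹' T) = closedBall y R_p := by
          ext x
          simp [hT, hy₂, mem_closedBall, dist_comm]
        rw [this, vol_cb _ hRp]
      · have hy₂ : ¬ ‖y‖ ≤ r_I := by simpa using hy
        rw [Set.indicator_of_notMem hy]
        have : ((fun x : E => (x, y)) ⁻¹' T) = ∅ := by
          ext x; simp [hT, hy₂]
        simp [this]
    simp_rw [hsec]
    rw [lintegral_indicator measurableSet_closedBall, setLIntegral_const, vol_cb _ hrI]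
  rw [← h1, h2, mul_comm]

lemma polar_key (hrI : 0 < r_I) (hRp : 0 < R_p) :
    IntegrableOn (fun t : ℝ => t * SI t r_I R_p) (Set.Ioi 0) ∧
      ∫ t in Set.Ioi (0:ℝ), t * SI t r_I R_p = π * r_I ^ 2 * R_p ^ 2 / 2 := by
  have hmeasE : Measurable (fun x : E => SI ‖x‖ r_I R_p) :=
    (meas_SI (r_I := r_I) (R_p := R_p)).comp measurable_norm
  -- Bochner integral over E
  have hofReal : ∀ x : E, ENNReal.ofReal (SI ‖x‖ r_I R_p)
      = volume (closedBall (0:E) r_I ∩ closedBall x R_p) := by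
    intro x
    rw [SI, ENNReal.ofReal_toReal (fSI_lt_top hrI.le ‖x‖).ne, ← rot_inv]
  have hlint : ∫⁻ x : E, ENNReal.ofReal (SI ‖x‖ r_I R_p)
      = ENNReal.ofReal (π * r_I ^ 2) * ENNReal.ofReal (π * R_p ^ 2) := by
    simp_rw [hofReal]
    exact fubini_step hrI.le hRp.le
  have hInt : Integrable (fun x : E => SI ‖x‖ r_I R_p) := by
    refine ⟨hmeasE.aestronglyMeasurable, ?_⟩
    rw [HasFiniteIntegral]
    simp_rw [Real.enorm_eq_ofReal (SI_nonneg _)]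
    rw [hlint]
    exact ENNReal.mul_lt_top ENNReal.ofReal_lt_top ENNReal.ofReal_lt_top
  have hI : ∫ x : E, SI ‖x‖ r_I R_p = π * r_I ^ 2 * (π * R_p ^ 2) := by
    rw [integral_eq_lintegral_of_nonneg_ae (Filter.Eventually.of_forall fun x => SI_nonneg _)
      hmeasE.aestronglyMeasurable, hlint, ENNReal.toReal_mul,
      ENNReal.toReal_ofReal (by positivity), ENNReal.toReal_ofReal (by positivity)]
  have hpolar := integral_fun_norm_addHaar (volume : Measure (EuclideanSpace ℝ (Fin 2)))
    (fun t => SI t r_I R_p)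
  rw [hI] at hpolar
  have hdim : Module.finrank ℝ (EuclideanSpace ℝ (Fin 2)) = 2 := finrank_euclideanSpace_fin
  rw [hdim] at hpolar
  have hball : (volume (ball (0:E) 1)).toReal = π := by
    rw [EuclideanSpace.volume_ball]
    simp only [Fintype.card_fin]
    rw [show ((2:ℕ):ℝ)/2 + 1 = 2 by norm_num, Real.Gamma_two]
    rw [sq_sqrt pi_nonneg]
    simp [ENNReal.toReal_ofReal pi_nonneg]
  rw [measureReal_def, hball] at hpolar
  norm_num [smul_eq_mul] at hpolar
  -- hpolar : π * r_I ^ 2 * (π * R_p ^ 2) = 2 * (π * ∫ t in Ioi 0, t * SI t r_I R_p)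
  have hIoi : ∫ t in Set.Ioi (0:ℝ), t * SI t r_I R_p = π * r_I ^ 2 * R_p ^ 2 / 2 := by
    have h2 : π * ((∫ t in Set.Ioi (0:ℝ), t * SI t r_I R_p) * 2)
        = π * (π * r_I ^ 2 * R_p ^ 2) := by linear_combination - hpolar
    have h3 := mul_left_cancel₀ pi_ne_zero h2
    linarith
  refine ⟨?_, hIoi⟩
  by_contra hni
  rw [MeasureTheory.integral_undef hni] at hIoi
  have : π * r_I ^ 2 * R_p ^ 2 / 2 > 0 := by positivity
  rw [← hIoi] at this
  exact lt_irrefl _ this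

lemma g_intable (hrI : 0 ≤ r_I) (hRp : 0 < R_p) (a b : ℝ) :
    IntervalIntegrable (fun t => 2 * t * SI t r_I R_p / (π * R_p ^ 2)) volume a b := by
  have hk : IntervalIntegrable (fun t : ℝ => 2 * |t|) volume a b :=
    (continuous_const.mul continuous_abs).intervalIntegrable a b
  refine hk.mono_fun ?_ ?_
  · exact ((((measurable_const.mul measurable_id).mul meas_SI).div_const _)).aestronglyMeasurable
  · refine Filter.Eventually.of_forall fun t => ?_
    show ‖2 * t * SI t r_I R_p / (π * R_p ^ 2)‖ ≤ ‖2 * |t|‖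
    have h1 : 0 ≤ SI t r_I R_p := SI_nonneg _
    have h2 : SI t r_I R_p ≤ π * R_p ^ 2 := SI_le_right hrI hRp.le t
    have hc : 0 < π * R_p ^ 2 := by positivity
    rw [Real.norm_eq_abs, Real.norm_eq_abs, abs_of_nonneg (by positivity : (0:ℝ) ≤ 2 * |t|)]
    rw [abs_div, abs_of_pos hc, div_le_iff₀ hc, abs_mul, abs_mul]
    calc |2| * |t| * |SI t r_I R_p| = 2 * |t| * SI t r_I R_p := by
          rw [abs_of_nonneg h1, abs_two]
      _ ≤ 2 * |t| * (π * R_p ^ 2) := by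
          apply mul_le_mul_of_nonneg_left h2 (by positivity)

lemma J_diff_nonneg (hrI : 0 ≤ r_I) (hRp : 0 < R_p) {a b : ℝ} (ha : 0 ≤ a) (hab : a ≤ b) :
    Jfun r_I R_p a ≤ Jfun r_I R_p b := by
  have h := intervalIntegral.integral_add_adjacent_intervals
    (g_intable hrI hRp 0 a) (g_intable hrI hRp a b)
  have hnn : 0 ≤ ∫ t in a..b, 2 * t * SI t r_I R_p / (π * R_p ^ 2) := by
    apply intervalIntegral.integral_nonneg hab
    intro t ht
    have : 0 ≤ t := le_trans ha ht.1
    have := SI_nonneg (r_I := r_I) (R_p := R_p) t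
    positivity
  rw [Jfun, Jfun, ← h]
  linarith

lemma J_diff_le (hrI : 0 ≤ r_I) (hRp : 0 < R_p) {a b : ℝ} (ha : 0 ≤ a) (hab : a ≤ b) :
    Jfun r_I R_p b - Jfun r_I R_p a ≤ b ^ 2 - a ^ 2 := by
  have h := intervalIntegral.integral_add_adjacent_intervals
    (g_intable hrI hRp 0 a) (g_intable hrI hRp a b)
  have hle : (∫ t in a..b, 2 * t * SI t r_I R_p / (π * R_p ^ 2)) ≤ ∫ t in a..b, 2 * t := by
    apply intervalIntegral.integral_mono_on hab (g_intable hrI hRp a b)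
      ((continuous_const.mul continuous_id).intervalIntegrable a b)
    intro t ht
    have ht0 : 0 ≤ t := le_trans ha ht.1
    have h1 : 0 ≤ SI t r_I R_p := SI_nonneg _
    have h2 : SI t r_I R_p ≤ π * R_p ^ 2 := SI_le_right hrI hRp.le t
    have hc : 0 < π * R_p ^ 2 := by positivity
    rw [div_le_iff₀ hc]
    calc 2 * t * SI t r_I R_p ≤ 2 * t * (π * R_p ^ 2) :=
          mul_le_mul_of_nonneg_left h2 (by positivity)
      _ = 2 * t * (π * R_p ^ 2) := rfl
  have h2t : (∫ t in a..b, 2 * t) = b ^ 2 - a ^ 2 := by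
    have : (∫ t in a..b, 2 * t) = 2 * ∫ t in a..b, t := intervalIntegral.integral_const_mul 2 _
    rw [this, integral_id]
    ring
  rw [Jfun, Jfun, ← h]
  rw [h2t] at hle
  linarith

lemma J_le_rI (hrI : 0 < r_I) (hRp : 0 < R_p) {r : ℝ} (hr : 0 ≤ r) :
    Jfun r_I R_p r ≤ r_I ^ 2 := by
  obtain ⟨hint, hval⟩ := polar_key hrI hRp
  have hc : 0 < π * R_p ^ 2 := by positivity
  have hre : Jfun r_I R_p r = (2 / (π * R_p ^ 2)) * ∫ t in Set.Ioc (0:ℝ) r, t * SI t r_I R_p := by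
    rw [Jfun, intervalIntegral.integral_of_le hr, ← integral_const_mul]
    apply setIntegral_congr_fun measurableSet_Ioc
    intro t _
    field_simp
  have hmono : (∫ t in Set.Ioc (0:ℝ) r, t * SI t r_I R_p)
      ≤ ∫ t in Set.Ioi (0:ℝ), t * SI t r_I R_p := by
    apply setIntegral_mono_set hint
    · refine (ae_restrict_iff' measurableSet_Ioi).2 (Filter.Eventually.of_forall ?_)
      intro t ht
      exact mul_nonneg (le_of_lt ht) (SI_nonneg _)
    · exact (Set.Ioc_subset_Ioi_self).eventuallyLE
  rw [hre]
  have h2c : (0:ℝ) ≤ 2 / (π * R_p ^ 2) := by positivity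
  calc (2 / (π * R_p ^ 2)) * ∫ t in Set.Ioc (0:ℝ) r, t * SI t r_I R_p
      ≤ (2 / (π * R_p ^ 2)) * ∫ t in Set.Ioi (0:ℝ), t * SI t r_I R_p :=
        mul_le_mul_of_nonneg_left hmono h2c
    _ = r_I ^ 2 := by
        rw [hval]
        field_simp

/-- `0 ≤ J(r_D) ≤ min(r_D², r_I²)`, and the closed-form collision probability `P_C`
is nonincreasing in the detection range `r_D`. -/
theorem pC_anti_in_detection_range (r_I R_p μ : ℝ)
    (hrI : 0 < r_I) (hRp : 0 < R_p) (hμ : 0 < μ) :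
    (∀ r_D : ℝ, 0 ≤ r_D →
      0 ≤ Jfun r_I R_p r_D ∧ Jfun r_I R_p r_D ≤ min (r_D ^ 2) (r_I ^ 2)) ∧
    AntitoneOn (pC r_I R_p μ) (Set.Ici (0:ℝ)) := by
  have hJ0 : Jfun r_I R_p 0 = 0 := intervalIntegral.integral_same
  constructor
  · intro r hr
    refine ⟨?_, le_min ?_ (J_le_rI hrI hRp hr)⟩
    · have := J_diff_nonneg hrI.le hRp le_rfl hr
      rw [hJ0] at this; exact this
    · have := J_diff_le hrI.le hRp le_rfl hr
      rw [hJ0] at this; simpa using this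
  · intro x hx y hy hxy
    simp only [Set.mem_Ici] at hx hy
    have hC : 0 < 1 - Real.exp (-μ * (π * r_I ^ 2)) := by
      have : -μ * (π * r_I ^ 2) < 0 := by
        have : 0 < μ * (π * r_I ^ 2) := by positivity
        linarith
      have := Real.exp_lt_one_iff.2 this
      linarith
    rw [pC, pC, div_eq_mul_inv, div_eq_mul_inv]
    refine mul_le_mul_of_nonneg_right ?_ (inv_nonneg.2 hC.le)
    set u1 := Real.exp (-μ * (π * x ^ 2)) with hu1
    set u2 := Real.exp (-μ * (π * y ^ 2)) with hu2
    set v := Real.exp (-μ * (π * (r_I ^ 2 - Jfun r_I R_p x))) with hv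
    set w := Real.exp (-μ * (π * (r_I ^ 2 - Jfun r_I R_p y))) with hw
    have hJmono : Jfun r_I R_p x ≤ Jfun r_I R_p y := J_diff_nonneg hrI.le hRp hx hxy
    have hJle : Jfun r_I R_p x ≤ r_I ^ 2 := J_le_rI hrI hRp hx
    have h1 : u2 ≤ u1 := by
      apply Real.exp_le_exp.2
      have hsq : x ^ 2 ≤ y ^ 2 := by nlinarith
      have := mul_le_mul_of_nonneg_left hsq (by positivity : (0:ℝ) ≤ μ * π)
      linarith
    have h2 : v ≤ w := by
      apply Real.exp_le_exp.2
      have h := mul_le_mul_of_nonneg_left hJmono (by positivity : (0:ℝ) ≤ μ * π)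
      nlinarith
    have h3 : v ≤ 1 := by
      rw [hv]
      apply Real.exp_le_one_iff.2
      have : 0 ≤ μ * (π * (r_I ^ 2 - Jfun r_I R_p x)) := by
        apply mul_nonneg hμ.le
        apply mul_nonneg pi_nonneg
        linarith
      linarith
    have h4 : 0 < v := Real.exp_pos _
    have h5 : 0 < u2 := Real.exp_pos _
    nlinarith [mul_nonneg (sub_nonneg.2 h1) (sub_nonneg.2 h3), mul_nonneg h5.le (sub_nonneg.2 h2)]
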